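/- Let f, f_n : [a,b] → ℝ be absolutely continuous functions with f_n → f uniformly on [a,b]. Suppose there is a measurable set A ⊆ [a,b] with m(A) > 0 and a function g with f_n'(t) → g(t) for a.a. t ∈ A, and there exists M ∈ L¹(a,b) with |f'(t)| ≤ M(t) a.e. and |f_n'(t)| ≤ M(t) a.e. for all n. Then f'(t) = g(t) for a.a. t ∈ A. -/

import Mathlib

open Set Filter MeasureTheory intervalIntegral

/-- Key lemma: if integrals over `Ioc a t` converge for all `t ∈ [a,b]` and the
functions are uniformly dominated by an integrable `M`, then integrals over all
measurable subsets of `[a,b]` converge. -/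
lemma key_set_tendsto (a b : ℝ) (hab : a ≤ b) (h : ℕ → ℝ → ℝ) (hL : ℝ → ℝ) (M : ℝ → ℝ)
    (hint : ∀ n, IntegrableOn (h n) (Icc a b)) (hintL : IntegrableOn hL (Icc a b))
    (hM : IntegrableOn M (Icc a b))
    (hbound : ∀ n, ∀ᵐ t ∂volume.restrict (Icc a b), |h n t| ≤ M t)
    (hboundL : ∀ᵐ t ∂volume.restrict (Icc a b), |hL t| ≤ M t)
    (hIoc : ∀ t ∈ Icc a b,
      Tendsto (fun n => ∫ x in Ioc a t, h n x) atTop (nhds (∫ x in Ioc a t, hL x))) :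
    ∀ E : Set ℝ, MeasurableSet E →
      Tendsto (fun n => ∫ x in E ∩ Icc a b, h n x) atTop
        (nhds (∫ x in E ∩ Icc a b, hL x)) := by
  -- integrability on subsets
  have hintsub : ∀ n, ∀ S : Set ℝ, S ⊆ Icc a b → IntegrableOn (h n) S :=
    fun n S hS => (hint n).mono_set hS
  have hintsubL : ∀ S : Set ℝ, S ⊆ Icc a b → IntegrableOn hL S :=
    fun S hS => hintL.mono_set hS
  have hMsub : ∀ S : Set ℝ, S ⊆ Icc a b → IntegrableOn M S := fun S hS => hM.mono_set hS
  -- |∫_S h n| ≤ ∫_S M for S ⊆ Icc a b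
  have habs : ∀ n, ∀ S : Set ℝ, MeasurableSet S → S ⊆ Icc a b →
      |∫ x in S, h n x| ≤ ∫ x in S, M x := by
    intro n S hSm hS
    calc |∫ x in S, h n x| ≤ ∫ x in S, |h n x| := by
          simpa [Real.norm_eq_abs] using MeasureTheory.norm_integral_le_integral_norm (μ := volume.restrict S)
            (f := h n)
        _ ≤ ∫ x in S, M x := by
          refine setIntegral_mono_ae_restrict ((hintsub n S hS).abs) (hMsub S hS) ?_
          exact ae_restrict_of_ae_restrict_of_subset hS (hbound n)
  have habsL : ∀ S : Set ℝ, MeasurableSet S → S ⊆ Icc a b →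
      |∫ x in S, hL x| ≤ ∫ x in S, M x := by
    intro S hSm hS
    calc |∫ x in S, hL x| ≤ ∫ x in S, |hL x| := by
          simpa [Real.norm_eq_abs] using MeasureTheory.norm_integral_le_integral_norm (μ := volume.restrict S)
            (f := hL)
        _ ≤ ∫ x in S, M x := by
          refine setIntegral_mono_ae_restrict ((hintsubL S hS).abs) (hMsub S hS) ?_
          exact ae_restrict_of_ae_restrict_of_subset hS hboundL
  -- convergence on subintervals Ioc s t of [a,b]
  have key0 : ∀ s t : ℝ, a ≤ s → s ≤ t → t ≤ b →
      Tendsto (fun n => ∫ x in Ioc s t, h n x) atTop (nhds (∫ x in Ioc s t, hL x)) := by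
    intro s t has hst htb
    have hsplit : ∀ k : ℝ → ℝ, IntegrableOn k (Icc a b) →
        ∫ x in Ioc s t, k x = (∫ x in Ioc a t, k x) - ∫ x in Ioc a s, k x := by
      intro k hk
      have hdisj : Disjoint (Ioc a s) (Ioc s t) := Ioc_disjoint_Ioc_of_le le_rfl
      have hun : Ioc a s ∪ Ioc s t = Ioc a t := Ioc_union_Ioc_eq_Ioc has hst
      have := setIntegral_union hdisj measurableSet_Ioc
        (hk.mono_set (Ioc_subset_Icc_self.trans (Icc_subset_Icc le_rfl (hst.trans htb))))
        (hk.mono_set ((Ioc_subset_Icc_self).trans (Icc_subset_Icc has htb)))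
        (f := k) (μ := volume)
      rw [hun] at this
      rw [this]; ring
    have h1 := hIoc t ⟨has.trans hst, htb⟩
    have h2 := hIoc s ⟨has, hst.trans htb⟩
    have := h1.sub h2
    rw [← hsplit hL hintL] at this
    exact this.congr fun n => (hsplit (h n) (hint n)).symm
  -- Dynkin system argument
  intro E hE
  have hgen : (inferInstance : MeasurableSpace ℝ) =
      MeasurableSpace.generateFrom { S : Set ℝ | ∃ l u, l < u ∧ Ioc l u = S } := by
    rw [(inferInstance : BorelSpace ℝ).measurable_eq, borel_eq_generateFrom_Ioc]
  refine MeasurableSpace.induction_on_inter (C := fun S _ => Tendsto (fun n => ∫ x in S ∩ Icc a b, h n x) atTop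
      (nhds (∫ x in S ∩ Icc a b, hL x))) hgen (isPiSystem_Ioc (id : ℝ → ℝ) (id : ℝ → ℝ))
    ?_ ?_ ?_ ?_ E hE
  · simp only [Set.empty_inter, setIntegral_empty]
    exact tendsto_const_nhds
  · -- basic: Ioc l u
    rintro S ⟨l, u, hlu, rfl⟩
    have hset : (Ioc l u ∩ Icc a b : Set ℝ) =ᵐ[volume] Ioc (max l a) (min u b) := by
      have hna : ∀ᵐ x : ℝ ∂volume, x ≠ a := by
        simpa using (ae_iff (μ := volume) (p := fun x : ℝ => x ≠ a)).2 (by simp)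
      filter_upwards [hna] with x hx
      simp only [Set.mem_inter_iff, Set.mem_Ioc, Set.mem_Icc, eq_iff_iff]
      constructor
      · rintro ⟨⟨hlx, hxu⟩, hax, hxb⟩
        exact ⟨max_lt hlx (lt_of_le_of_ne hax (Ne.symm hx)), le_min hxu hxb⟩
      · rintro ⟨hlt, hle⟩
        obtain ⟨h1, h2⟩ := max_lt_iff.1 hlt
        obtain ⟨h3, h4⟩ := le_min_iff.1 hle
        exact ⟨⟨h1, h3⟩, h2.le, h4⟩
    have heq : ∀ k : ℝ → ℝ, ∫ x in Ioc l u ∩ Icc a b, k x = ∫ x in Ioc (max l a) (min u b), k x :=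
      fun k => setIntegral_congr_set hset
    simp only [heq]
    rcases le_or_gt (max l a) (min u b) with hle | hlt
    · exact key0 _ _ (le_max_right l a) hle (min_le_right u b)
    · rw [Ioc_eq_empty (not_lt.mpr hlt.le)]
      simp only [setIntegral_empty]
      exact tendsto_const_nhds
  · -- complement
    intro S hS hC
    have hIcc : Tendsto (fun n => ∫ x in Icc a b, h n x) atTop (nhds (∫ x in Icc a b, hL x)) := by
      have := hIoc b ⟨le_rfl.trans hab, le_rfl⟩
      simpa [integral_Icc_eq_integral_Ioc] using this
    have hdiff : ∀ k : ℝ → ℝ, IntegrableOn k (Icc a b) →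
        ∫ x in Sᶜ ∩ Icc a b, k x = (∫ x in Icc a b, k x) - ∫ x in S ∩ Icc a b, k x := by
      intro k hk
      have : Sᶜ ∩ Icc a b = Icc a b \ (S ∩ Icc a b) := by
        ext x; simp only [Set.mem_inter_iff, Set.mem_compl_iff, Set.mem_diff]; tauto
      rw [this, integral_diff (hS.inter measurableSet_Icc) hk Set.inter_subset_right]
    rw [hdiff hL hintL]
    exact (hIcc.sub hC).congr fun n => (hdiff (h n) (hint n)).symm
  · -- countable disjoint union
    intro f hdisj hfm hCf
    set s : ℕ → Set ℝ := fun i => f i ∩ Icc a b with hs_def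
    have hsm : ∀ i, MeasurableSet (s i) := fun i => (hfm i).inter measurableSet_Icc
    have hssub : ∀ i, s i ⊆ Icc a b := fun i => Set.inter_subset_right
    have hsdisj : Pairwise (Function.onFun Disjoint s) := fun i j hij =>
      ((hdisj hij).mono Set.inter_subset_left Set.inter_subset_left)
    have hEeq : (⋃ i, f i) ∩ Icc a b = ⋃ i, s i := by
      rw [Set.iUnion_inter]
    set T : ℕ → Set ℝ := fun K => ⋃ i ∈ Finset.range K, s i with hT_def
    have hTm : ∀ K, MeasurableSet (T K) := fun K =>
      (Finset.range K).measurableSet_biUnion fun i _ => hsm i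
    have hTmono : Monotone T := fun K L hKL =>
      Set.biUnion_subset_biUnion_left fun i hi =>
        Finset.mem_range.2 (lt_of_lt_of_le (Finset.mem_range.1 hi) hKL)
    have hTsub : ∀ K, T K ⊆ ⋃ i, s i := fun K =>
      Set.iUnion₂_subset fun i _ => Set.subset_iUnion s i
    have hTunion : (⋃ K, T K) = ⋃ i, s i := by
      apply Set.Subset.antisymm (Set.iUnion_subset hTsub)
      refine Set.iUnion_subset fun i => ?_
      intro x hx
      exact Set.mem_iUnion.2 ⟨i + 1, Set.mem_biUnion (Finset.mem_range.2 (Nat.lt_succ_self i)) hx⟩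
    have hUsub : (⋃ i, s i) ⊆ Icc a b := Set.iUnion_subset hssub
    have hUm : MeasurableSet (⋃ i, s i) := MeasurableSet.iUnion hsm
    -- ∫_{T K} M → ∫_{∪ s i} M
    have hMT : Tendsto (fun K => ∫ x in T K, M x) atTop (nhds (∫ x in ⋃ i, s i, M x)) := by
      have := tendsto_setIntegral_of_monotone hTm hTmono (by rw [hTunion]; exact hMsub _ hUsub)
      rwa [hTunion] at this
    -- tail bound
    have htail : ∀ K, ∀ k : ℝ → ℝ, IntegrableOn k (Icc a b) →
        ∫ x in (⋃ i, s i) \ T K, k x = (∫ x in ⋃ i, s i, k x) - ∫ x in T K, k x := by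
      intro K k hk
      rw [integral_diff (hTm K) (hk.mono_set hUsub) (hTsub K)]
    -- ∫ over T K converges (finite sum)
    have hCTK : ∀ K, Tendsto (fun n => ∫ x in T K, h n x) atTop (nhds (∫ x in T K, hL x)) := by
      intro K
      have hsum : ∀ k : ℝ → ℝ, IntegrableOn k (Icc a b) →
          ∫ x in T K, k x = ∑ i ∈ Finset.range K, ∫ x in s i, k x := by
        intro k hk
        exact integral_biUnion_finset (Finset.range K) (fun i _ => hsm i)
          (fun i _ j _ hij => hsdisj hij) (fun i _ => hk.mono_set (hssub i))
      rw [hsum hL hintL]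
      have : Tendsto (fun n => ∑ i ∈ Finset.range K, ∫ x in s i, h n x) atTop
          (nhds (∑ i ∈ Finset.range K, ∫ x in s i, hL x)) :=
        tendsto_finset_sum _ fun i _ => hCf i
      exact this.congr fun n => (hsum (h n) (hint n)).symm
    -- main ε argument
    rw [hEeq]
    rw [Metric.tendsto_atTop]
    intro ε hε
    -- choose K with ∫_{∪ \ T K} M < ε/4
    have hMtail : Tendsto (fun K => (∫ x in ⋃ i, s i, M x) - ∫ x in T K, M x) atTop (nhds 0) := by
      simpa using (tendsto_const_nhds (x := ∫ x in ⋃ i, s i, M x)).sub hMT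
    obtain ⟨K, hK⟩ := (Metric.tendsto_atTop.1 hMtail (ε / 4) (by linarith)).imp
      (fun K hK => hK K le_rfl)
    have hKdist : |∫ x in (⋃ i, s i) \ T K, M x| < ε / 4 := by
      rw [htail K M hM]
      simpa [Real.dist_eq] using hK
    have hMtailK : ∫ x in (⋃ i, s i) \ T K, M x < ε / 4 := (le_abs_self _).trans_lt hKdist
    have hdiffsub : (⋃ i, s i) \ T K ⊆ Icc a b := Set.diff_subset.trans hUsub
    have hdiffm : MeasurableSet ((⋃ i, s i) \ T K) := hUm.diff (hTm K)
    obtain ⟨N, hN⟩ := Metric.tendsto_atTop.1 (hCTK K) (ε / 4) (by linarith)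
    refine ⟨N, fun n hn => ?_⟩
    have e1 : |∫ x in (⋃ i, s i) \ T K, h n x| ≤ ∫ x in (⋃ i, s i) \ T K, M x :=
      habs n _ hdiffm hdiffsub
    have e2 : |∫ x in (⋃ i, s i) \ T K, hL x| ≤ ∫ x in (⋃ i, s i) \ T K, M x :=
      habsL _ hdiffm hdiffsub
    have d1 : (∫ x in ⋃ i, s i, h n x) - ∫ x in T K, h n x = ∫ x in (⋃ i, s i) \ T K, h n x :=
      (htail K (h n) (hint n)).symm
    have d2 : (∫ x in ⋃ i, s i, hL x) - ∫ x in T K, hL x = ∫ x in (⋃ i, s i) \ T K, hL x :=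
      (htail K hL hintL).symm
    have hNn := hN n hn
    rw [Real.dist_eq] at hNn ⊢
    have : (∫ x in ⋃ i, s i, h n x) - ∫ x in ⋃ i, s i, hL x =
        ((∫ x in (⋃ i, s i) \ T K, h n x) - ∫ x in (⋃ i, s i) \ T K, hL x) +
          ((∫ x in T K, h n x) - ∫ x in T K, hL x) := by
      rw [← d1, ← d2]; ring
    rw [this]
    calc |_ + _| ≤ |(∫ x in (⋃ i, s i) \ T K, h n x) - ∫ x in (⋃ i, s i) \ T K, hL x| +
          |(∫ x in T K, h n x) - ∫ x in T K, hL x| := abs_add_le _ _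
      _ ≤ (|∫ x in (⋃ i, s i) \ T K, h n x| + |∫ x in (⋃ i, s i) \ T K, hL x|) +
          |(∫ x in T K, h n x) - ∫ x in T K, hL x| := by
            gcongr; exact abs_sub _ _
      _ < (ε / 4 + ε / 4) + ε / 4 := by
            gcongr
            · exact e1.trans_lt hMtailK
            · exact e2.trans_lt hMtailK
      _ < ε := by linarith

/-- `f` is absolutely continuous on `[a,b]` with density (a.e. derivative) `f'`. -/
def AbsContOn (f f' : ℝ → ℝ) (a b : ℝ) : Prop :=
  IntegrableOn f' (Icc a b) ∧ ∀ t ∈ Icc a b, f t = f a + ∫ s in a..t, f' s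

set_option maxHeartbeats 1000000 in
theorem stmt14 (a b : ℝ) (hab : a < b)
    (f : ℝ → ℝ) (f' : ℝ → ℝ) (F : ℕ → ℝ → ℝ) (F' : ℕ → ℝ → ℝ)
    (hf : AbsContOn f f' a b) (hF : ∀ n, AbsContOn (F n) (F' n) a b)
    (hunif : TendstoUniformlyOn F f atTop (Icc a b))
    (A : Set ℝ) (hA : MeasurableSet A) (hAsub : A ⊆ Icc a b) (hApos : 0 < volume A)
    (g : ℝ → ℝ)
    (hconv : ∀ᵐ t ∂volume.restrict A, Tendsto (fun n => F' n t) atTop (nhds (g t)))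
    (M : ℝ → ℝ) (hM : IntegrableOn M (Icc a b))
    (hfM : ∀ᵐ t ∂volume.restrict (Icc a b), |f' t| ≤ M t)
    (hFM : ∀ n, ∀ᵐ t ∂volume.restrict (Icc a b), |F' n t| ≤ M t) :
    ∀ᵐ t ∂volume.restrict A, f' t = g t := by
  have hab' : a ≤ b := hab.le
  have ha : a ∈ Icc a b := ⟨le_rfl, hab'⟩
  -- Step 1: interval integral convergence
  have step1 : ∀ t ∈ Icc a b,
      Tendsto (fun n => ∫ x in Ioc a t, F' n x) atTop (nhds (∫ x in Ioc a t, f' x)) := by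
    intro t ht
    have heqn : ∀ n, ∫ x in Ioc a t, F' n x = F n t - F n a := by
      intro n
      rw [← intervalIntegral.integral_of_le ht.1, (hF n).2 t ht]; ring
    have heq : ∫ x in Ioc a t, f' x = f t - f a := by
      rw [← intervalIntegral.integral_of_le ht.1, hf.2 t ht]; ring
    rw [heq]
    exact ((hunif.tendsto_at ht).sub (hunif.tendsto_at ha)).congr fun n => (heqn n).symm
  -- Step 2: set convergence
  have hsets := key_set_tendsto a b hab' F' f' M (fun n => (hF n).1) hf.1 hM hFM hfM step1
  -- g is integrable on A
  have hFA : ∀ n, IntegrableOn (F' n) A := fun n => (hF n).1.mono_set hAsub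
  have hg_meas : AEStronglyMeasurable g (volume.restrict A) :=
    aestronglyMeasurable_of_tendsto_ae atTop (fun n => (hFA n).aestronglyMeasurable) hconv
  have hMA : IntegrableOn M A := hM.mono_set hAsub
  have hFMA : ∀ n, ∀ᵐ t ∂volume.restrict A, |F' n t| ≤ M t := fun n =>
    ae_restrict_of_ae_restrict_of_subset hAsub (hFM n)
  have hFMA' : ∀ᵐ t ∂volume.restrict A, ∀ n, |F' n t| ≤ M t := (ae_all_iff.2 hFMA)
  have hgM : ∀ᵐ t ∂volume.restrict A, |g t| ≤ M t := by
    filter_upwards [hconv, hFMA'] with t ht hbd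
    exact le_of_tendsto (ht.abs) (Eventually.of_forall hbd)
  have hgint : IntegrableOn g A := by
    refine Integrable.mono' hMA hg_meas ?_
    simpa [Real.norm_eq_abs] using hgM
  -- DCT on subsets of A
  have hDCT : ∀ E : Set ℝ, MeasurableSet E → E ⊆ A →
      Tendsto (fun n => ∫ x in E, F' n x) atTop (nhds (∫ x in E, g x)) := by
    intro E hE hEA
    refine tendsto_integral_of_dominated_convergence M
      (fun n => ((hFA n).mono_set hEA).aestronglyMeasurable)
      (hMA.mono_set hEA) ?_ ?_
    · intro n
      have := ae_restrict_of_ae_restrict_of_subset hEA (hFMA n)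
      simpa [Real.norm_eq_abs] using this
    · exact ae_restrict_of_ae_restrict_of_subset hEA hconv
  -- uniqueness of limits on measurable subsets
  have hint_eq : ∀ s : Set ℝ, MeasurableSet s →
      ∫ x in s ∩ A, f' x = ∫ x in s ∩ A, g x := by
    intro s hs
    have hsA : MeasurableSet (s ∩ A) := hs.inter hA
    have hsub : s ∩ A ⊆ A := Set.inter_subset_right
    have h1 := hsets (s ∩ A) hsA
    have : (s ∩ A) ∩ Icc a b = s ∩ A :=
      Set.inter_eq_left.mpr (hsub.trans hAsub)
    rw [this] at h1
    exact tendsto_nhds_unique h1 (hDCT (s ∩ A) hsA hsub)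
  -- finite measure of A
  have hAfin : volume A < ⊤ :=
    lt_of_le_of_lt (measure_mono hAsub) (by simp [Real.volume_Icc])
  haveI : IsFiniteMeasure (volume.restrict A) :=
    ⟨by rwa [Measure.restrict_apply_univ]⟩
  refine ae_eq_of_forall_setIntegral_eq_of_sigmaFinite (μ := volume.restrict A) ?_ ?_ ?_
  · intro s hs _
    exact MeasureTheory.Integrable.restrict (hf.1.mono_set hAsub)
  · intro s hs _
    exact MeasureTheory.Integrable.restrict hgint
  · intro s hs _
    rw [Measure.restrict_restrict hs]
    exact hint_eq s hs
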